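/- A group G is left-orderable if and only if there exist a nonempty linearly ordered set X and a faithful action of G on X by order-preserving bijections. -/

import Mathlib

/-- A left order on a group `G`: a strict linear order invariant under left multiplication. -/
structure IsLeftOrder {G : Type*} [Group G] (r : G → G → Prop) : Prop where
  irrefl : ∀ x, ¬ r x x
  trans : ∀ x y z, r x y → r y z → r x z
  total : ∀ x y, x ≠ y → r x y ∨ r y x
  mul_left : ∀ x y z, r x y → r (z * x) (z * y)

universe u

noncomputable def IsLeftOrder.toLinearOrder {G : Type u} [Group G] {r : G → G → Prop}
    (h : IsLeftOrder r) : LinearOrder G where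
  le a b := r a b ∨ a = b
  lt := r
  le_refl a := Or.inr rfl
  le_trans a b c hab hbc := by
    rcases hab with hab | rfl
    · rcases hbc with hbc | rfl
      · exact Or.inl (h.trans _ _ _ hab hbc)
      · exact Or.inl hab
    · exact hbc
  le_antisymm a b hab hba := by
    rcases hab with hab | rfl
    · rcases hba with hba | rfl
      · exact absurd (h.trans _ _ _ hab hba) (h.irrefl a)
      · rfl
    · rfl
  le_total a b := by
    by_cases hab : a = b
    · exact Or.inl (Or.inr hab)
    · rcases h.total a b hab with hr | hr
      · exact Or.inl (Or.inl hr)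
      · exact Or.inr (Or.inl hr)
  lt_iff_le_not_ge a b := by
    constructor
    · intro hr
      refine ⟨Or.inl hr, ?_⟩
      rintro (hba | rfl)
      · exact h.irrefl _ (h.trans _ _ _ hr hba)
      · exact h.irrefl _ hr
    · rintro ⟨hab | rfl, hn⟩
      · exact hab
      · exact absurd (Or.inr rfl) hn
  toDecidableLE := fun _ _ => Classical.dec _

/-- A group is left-orderable iff it acts faithfully on some nonempty linearly ordered set
by order-preserving bijections. -/
theorem leftOrderable_iff_faithful_order_action {G : Type u} [Group G] :
    (∃ r : G → G → Prop, IsLeftOrder r) ↔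
      ∃ (X : Type u) (_ : LinearOrder X), Nonempty X ∧
        ∃ ρ : G →* (X ≃o X), Function.Injective ρ := by
  constructor
  · rintro ⟨r, h⟩
    refine ⟨G, h.toLinearOrder, ⟨1⟩, ?_⟩
    letI := h.toLinearOrder
    have key : ∀ g a b : G, (g * a ≤ g * b) ↔ a ≤ b := by
      intro g a b
      show (r (g * a) (g * b) ∨ g * a = g * b) ↔ (r a b ∨ a = b)
      constructor
      · rintro (hr | he)
        · left
          have := h.mul_left _ _ g⁻¹ hr
          simpa using this
        · right; exact mul_left_cancel he
      · rintro (hr | rfl)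
        · exact Or.inl (h.mul_left _ _ g hr)
        · exact Or.inr rfl
    refine ⟨{ toFun := fun g => ⟨Equiv.mulLeft g, key g _ _⟩,
              map_one' := ?_, map_mul' := ?_ }, ?_⟩
    · ext x; simp
    · intro a b; ext x; simp [RelIso.mul_apply, mul_assoc]; rfl
    · intro a b hab
      have := congrArg (fun f : G ≃o G => f 1) hab
      have h2 : a * 1 = b * 1 := this
      simpa using h2
  · rintro ⟨X, instLO, ⟨x₀⟩, ρ, hρ⟩
    classical
    set W : X → X → Prop := WellOrderingRel with hW
    have wf : WellFounded W := (WellOrderingRel.isWellOrder).wf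
    -- the set of points where g and h differ
    set D : G → G → Set X := fun g h => {x | ρ g x ≠ ρ h x} with hD
    have hDne : ∀ g h : G, g ≠ h → (D g h).Nonempty := by
      intro g h hgh
      by_contra hcon
      rw [Set.not_nonempty_iff_eq_empty, Set.eq_empty_iff_forall_notMem] at hcon
      exact hgh (hρ (by ext x; exact not_not.mp (hcon x)))
    -- define r
    set m : ∀ g h : G, (D g h).Nonempty → X := fun g h hne => wf.min (D g h) hne with hm
    set r : G → G → Prop := fun g h => ∃ hne : (D g h).Nonempty, ρ g (m g h hne) < ρ h (m g h hne) with hr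
    have hmem : ∀ g h (hne : (D g h).Nonempty), ρ g (m g h hne) ≠ ρ h (m g h hne) :=
      fun g h hne => wf.min_mem (D g h) hne
    have hmin : ∀ g h (hne : (D g h).Nonempty) c, W c (m g h hne) → ρ g c = ρ h c := by
      intro g h hne c hc
      by_contra hcon
      exact wf.not_lt_min (D g h) (Set.mem_setOf.mpr hcon) hc
    -- key: if m' ∈ D g h and everything W-below m' agrees, then m g h _ = m'
    have huniq : ∀ g h (hne : (D g h).Nonempty) (m' : X), m' ∈ D g h →
        (∀ c, W c m' → ρ g c = ρ h c) → m g h hne = m' := by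
      intro g h hne m' hm' hbelow
      rcases trichotomous_of W (m g h hne) m' with hlt | heq | hgt
      · exact absurd (hbelow _ hlt) (hmem g h hne)
      · exact heq
      · exact absurd (hmin g h hne m' hgt) hm'
    refine ⟨r, ?_, ?_, ?_, ?_⟩
    · rintro g ⟨hne, hlt⟩
      exact absurd rfl (hmem g g hne)
    · rintro x y z ⟨hxy, hxylt⟩ ⟨hyz, hyzlt⟩
      set a := m x y hxy with ha
      set b := m y z hyz with hb
      rcases trichotomous_of W a b with hab | hab | hab
      -- a strictly below b : at a, y and z agree
      · have hyz_a : ρ y a = ρ z a := hmin y z hyz a hab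
        have hxz_a : ρ x a < ρ z a := hyz_a ▸ hxylt
        have hmemD : a ∈ D x z := ne_of_lt hxz_a
        have hne : (D x z).Nonempty := ⟨a, hmemD⟩
        refine ⟨hne, ?_⟩
        have heq : m x z hne = a := by
          apply huniq
          · exact hmemD
          · intro c hc
            have h1 : ρ x c = ρ y c := hmin x y hxy c hc
            have h2 : ρ y c = ρ z c := hmin y z hyz c (_root_.trans hc hab)
            exact h1.trans h2
        rw [heq]; exact hxz_a
      · have hxz_a : ρ x a < ρ z a := hxylt.trans (by rw [hab]; exact hyzlt)
        have hmemD : a ∈ D x z := ne_of_lt hxz_a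
        have hne : (D x z).Nonempty := ⟨a, hmemD⟩
        refine ⟨hne, ?_⟩
        have heq : m x z hne = a := by
          apply huniq
          · exact hmemD
          · intro c hc
            exact (hmin x y hxy c hc).trans (hmin y z hyz c (show W c b from hab ▸ hc))
        rw [heq]; exact hxz_a
      · have hxy_b : ρ x b = ρ y b := hmin x y hxy b hab
        have hxz_b : ρ x b < ρ z b := hxy_b ▸ hyzlt
        have hmemD : b ∈ D x z := ne_of_lt hxz_b
        have hne : (D x z).Nonempty := ⟨b, hmemD⟩
        refine ⟨hne, ?_⟩
        have heq : m x z hne = b := by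
          apply huniq
          · exact hmemD
          · intro c hc
            exact (hmin x y hxy c (_root_.trans hc hab)).trans (hmin y z hyz c hc)
        rw [heq]; exact hxz_b
    · intro g h hgh
      have hne := hDne g h hgh
      have hne' : (D h g).Nonempty := by
        obtain ⟨c, hc⟩ := hne
        exact ⟨c, Ne.symm hc⟩
      have hDsymm : D h g = D g h := by
        ext c; exact ne_comm
      have hmeq : m h g hne' = m g h hne := by
        apply huniq
        · exact Ne.symm (wf.min_mem (D g h) hne)
        · intro c hc
          exact (hmin g h hne c hc).symm
      rcases lt_or_gt_of_ne (hmem g h hne) with hlt | hgt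
      · exact Or.inl ⟨hne, hlt⟩
      · refine Or.inr ⟨hne', ?_⟩
        rw [hmeq]; exact hgt
    · rintro x y z ⟨hne, hlt⟩
      have hDeq : D (z * x) (z * y) = D x y := by
        ext c
        simp only [hD, Set.mem_setOf_eq, map_mul]
        rw [RelIso.mul_apply, RelIso.mul_apply]
        exact not_congr (ρ z).injective.eq_iff
      have hne' : (D (z * x) (z * y)).Nonempty := hDeq ▸ hne
      refine ⟨hne', ?_⟩
      have hmeq : m (z * x) (z * y) hne' = m x y hne := by
        apply huniq
        · rw [hDeq]
          exact wf.min_mem (D x y) hne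
        · intro c hc
          have := hmin x y hne c hc
          rw [map_mul, map_mul, RelIso.mul_apply, RelIso.mul_apply, this]
      rw [hmeq, map_mul, map_mul, RelIso.mul_apply, RelIso.mul_apply]
      exact (ρ z).strictMono hlt
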